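/- Let A : ℝ → Matrix (Fin n) (Fin n) ℂ be continuous and suppose that for every t, A(t) commutes with ∫_{s∈[0,t]} A(s) ds. Then the function Y(t) := exp(∫_{s∈[0,t]} A(s) ds) satisfies Y(0) = 1 and HasDerivAt Y (A(t) * Y(t)) t for every t; i.e., when A commutes with its integral, Y(t) = exp(∫₀^t A(s) ds) solves Y' = A(t)Y, Y(0) = I. -/

import Mathlib

open scoped Matrix.Norms.L2Operator

/-- If `A(t)` commutes with its integral `∫₀ᵗ A(s) ds` for every `t`, then
`Y(t) = exp (∫₀ᵗ A(s) ds)` solves `Y' = A(t) Y`, `Y(0) = I`. -/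
theorem exp_integral_solves_ivp {n : ℕ} (A : ℝ → Matrix (Fin n) (Fin n) ℂ)
    (hA : Continuous A)
    (hcomm : ∀ t, Commute (A t) (∫ s in (0:ℝ)..t, A s)) :
    NormedSpace.exp (∫ s in (0:ℝ)..(0:ℝ), A s) = 1 ∧
      ∀ t, HasDerivAt (fun u : ℝ => NormedSpace.exp (∫ s in (0:ℝ)..u, A s))
        (A t * NormedSpace.exp (∫ s in (0:ℝ)..t, A s)) t := by
  set B : ℝ → Matrix (Fin n) (Fin n) ℂ := fun u => ∫ s in (0:ℝ)..u, A s with hBdef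
  have hint : ∀ a b : ℝ, IntervalIntegrable A MeasureTheory.volume a b :=
    fun a b => hA.intervalIntegrable a b
  have hB : ∀ u, HasDerivAt B (A u) u := by
    intro u
    exact intervalIntegral.integral_hasDerivAt_right (hint 0 u)
      (hA.stronglyMeasurableAtFilter _ _) hA.continuousAt
  have hBcont : Continuous B := continuous_iff_continuousAt.2 fun u => (hB u).continuousAt
  -- derivative of powers of B
  have hpow : ∀ (m : ℕ) (u : ℝ),
      HasDerivAt (fun v => B v ^ (m + 1)) ((m + 1 : ℕ) • (A u * B u ^ m)) u := by
    intro m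
    induction m with
    | zero =>
      intro u
      simpa using (hB u)
    | succ m ih =>
      intro u
      have h := (hB u).mul (ih u)
      have hc : B u * (A u * B u ^ m) = A u * B u ^ (m + 1) := by
        rw [← mul_assoc, ← (hcomm u).eq, mul_assoc, ← pow_succ']
      have hfun : (fun v => B v ^ (m + 1 + 1)) = fun y => B y * B y ^ (m + 1) := by
        funext y; rw [pow_succ']
      rw [hfun]
      convert h using 1
      case e'_4 => rfl
      case e'_5 => rfl
      case e'_6 => rfl
      case e'_8 => rfl
      rw [mul_smul_comm, hc, succ_nsmul]
      exact add_comm _ _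
  refine ⟨by simp, ?_⟩
  intro t
  -- bounds on a ball around t
  obtain ⟨C₁, hC₁⟩ := (isCompact_closedBall t 1).exists_bound_of_continuousOn
    hA.continuousOn
  obtain ⟨C₂, hC₂⟩ := (isCompact_closedBall t 1).exists_bound_of_continuousOn
    hBcont.continuousOn
  set K : ℝ := max 1 (max C₁ C₂) with hKdef
  have hK1 : (1:ℝ) ≤ K := le_max_left _ _
  have hK0 : (0:ℝ) ≤ K := le_trans zero_le_one hK1
  have hKA : ∀ u ∈ Metric.ball t 1, ‖A u‖ ≤ K := fun u hu =>
    (hC₁ u (Metric.ball_subset_closedBall hu)).trans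
      ((le_max_left _ _).trans (le_max_right _ _))
  have hKB : ∀ u ∈ Metric.ball t 1, ‖B u‖ ≤ K := fun u hu =>
    (hC₂ u (Metric.ball_subset_closedBall hu)).trans
      ((le_max_right _ _).trans (le_max_right _ _))
  -- helper bound
  have hprod : ∀ (X Y : Matrix (Fin n) (Fin n) ℂ) (m : ℕ), ‖X * Y ^ m‖ ≤ ‖X‖ * ‖Y‖ ^ m := by
    intro X Y m
    induction m with
    | zero => simp
    | succ m ih =>
      rw [pow_succ, ← mul_assoc]
      calc ‖X * Y ^ m * Y‖ ≤ ‖X * Y ^ m‖ * ‖Y‖ := norm_mul_le _ _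
        _ ≤ ‖X‖ * ‖Y‖ ^ m * ‖Y‖ := by
            exact mul_le_mul_of_nonneg_right ih (norm_nonneg _)
        _ = ‖X‖ * ‖Y‖ ^ (m + 1) := by ring
  -- the series and its termwise derivative
  set g : ℕ → ℝ → Matrix (Fin n) (Fin n) ℂ :=
    fun m u => ((m.factorial : ℂ))⁻¹ • B u ^ m with hg
  set g' : ℕ → ℝ → Matrix (Fin n) (Fin n) ℂ :=
    fun m u => match m with
      | 0 => 0
      | (m+1) => ((m.factorial : ℂ))⁻¹ • (A u * B u ^ m) with hg'
  set u : ℕ → ℝ := fun m => match m with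
    | 0 => 0
    | (m+1) => K * (K ^ (m+1) / m.factorial) with hu
  have hu_sum : Summable u := by
    have h1 : Summable (fun m : ℕ => K * (K ^ (m+1) / m.factorial)) := by
      have := (Real.summable_pow_div_factorial K).mul_left (K * K)
      refine this.congr fun m => ?_
      rw [pow_succ']
      ring
    exact (summable_nat_add_iff 1).mp h1
  have hderiv : ∀ (m : ℕ) (y : ℝ), HasDerivAt (g m) (g' m y) y := by
    intro m y
    match m with
    | 0 =>
      have : HasDerivAt (fun _ : ℝ => (1 : Matrix (Fin n) (Fin n) ℂ)) 0 y :=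
        hasDerivAt_const y _
      simpa [hg, hg'] using this
    | (m+1) =>
      have h := (hpow m y).const_smul (((m+1).factorial : ℂ))⁻¹
      have h1 : ((m+1 : ℕ) : ℂ) ≠ 0 := by exact_mod_cast Nat.succ_ne_zero m
      have h2 : ((m.factorial : ℕ) : ℂ) ≠ 0 := by exact_mod_cast (Nat.factorial_pos m).ne'
      have hfac : (((m+1).factorial : ℂ))⁻¹ • ((m + 1 : ℕ) • (A y * B y ^ m)) =
          ((m.factorial : ℂ))⁻¹ • (A y * B y ^ m) := by
        rw [← Nat.cast_smul_eq_nsmul ℂ, smul_smul]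
        congr 1
        rw [Nat.factorial_succ, Nat.cast_mul, mul_inv,
          mul_comm (((m+1 : ℕ) : ℂ))⁻¹ ((m.factorial : ℂ))⁻¹, mul_assoc,
          inv_mul_cancel₀ h1, mul_one]
      rw [hfac] at h
      exact h
  have hbound : ∀ (m : ℕ) (y : ℝ), y ∈ Metric.ball t 1 → ‖g' m y‖ ≤ u m := by
    intro m y hy
    match m with
    | 0 => simp [hg', hu]
    | (m+1) =>
      have hfp : (0:ℝ) < m.factorial := by exact_mod_cast Nat.factorial_pos m
      have h1 : ‖g' (m+1) y‖ ≤ ((m.factorial : ℝ))⁻¹ * (‖A y‖ * ‖B y‖ ^ m) := by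
        show ‖((m.factorial : ℂ))⁻¹ • (A y * B y ^ m)‖ ≤ _
        rw [norm_smul]
        have hns : ‖((m.factorial : ℂ))⁻¹‖ = ((m.factorial : ℝ))⁻¹ := by
          rw [norm_inv]
          norm_num
        rw [hns]
        exact mul_le_mul_of_nonneg_left (hprod _ _ m) (by positivity)
      have h2 : ‖A y‖ * ‖B y‖ ^ m ≤ K * K ^ m := by
        have ha := hKA y hy
        have hb := hKB y hy
        gcongr <;> first
          | exact norm_nonneg _
          | exact ha
          | exact hb
      calc ‖g' (m+1) y‖ ≤ ((m.factorial : ℝ))⁻¹ * (K * K ^ m) :=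
            le_trans h1 (mul_le_mul_of_nonneg_left h2 (by positivity))
        _ ≤ K * (K ^ (m+1) / m.factorial) := by
            rw [pow_succ', div_eq_mul_inv]
            have hX : (0:ℝ) ≤ K * K ^ m * ((m.factorial : ℝ))⁻¹ := by positivity
            calc ((m.factorial : ℝ))⁻¹ * (K * K ^ m)
                = 1 * (K * K ^ m * ((m.factorial : ℝ))⁻¹) := by ring
              _ ≤ K * (K * K ^ m * ((m.factorial : ℝ))⁻¹) :=
                  mul_le_mul_of_nonneg_right hK1 hX
        _ = u (m+1) := rfl
  have hsum0 : Summable fun m => g m t := by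
    simpa [hg] using NormedSpace.expSeries_summable' (𝕂 := ℂ) (B t)
  have hmain := hasDerivAt_tsum_of_isPreconnected hu_sum Metric.isOpen_ball
    (convex_ball t 1).isPreconnected (fun m y _ => hderiv m y) hbound (Metric.mem_ball_self one_pos)
    hsum0 (Metric.mem_ball_self one_pos)
  have hfun : (fun z => ∑' m, g m z) = fun z : ℝ => NormedSpace.exp (B z) := by
    funext z
    rw [NormedSpace.exp_eq_tsum ℂ]
  have hsum' : Summable fun m => g' m t :=
    Summable.of_norm_bounded hu_sum fun m => hbound m t (Metric.mem_ball_self one_pos)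
  have hval : ∑' m, g' m t = A t * NormedSpace.exp (B t) := by
    rw [Summable.tsum_eq_zero_add hsum']
    have h0 : g' 0 t = 0 := rfl
    have hstep : (fun m : ℕ => g' (m+1) t)
        = fun m : ℕ => A t * (((m.factorial : ℂ))⁻¹ • B t ^ m) := by
      funext m
      show ((m.factorial : ℂ))⁻¹ • (A t * B t ^ m) = _
      rw [mul_smul_comm]
    rw [h0, zero_add, hstep,
      Summable.tsum_mul_left _ (NormedSpace.expSeries_summable' (𝕂 := ℂ) (B t)),
      NormedSpace.exp_eq_tsum ℂ]
  rw [hfun, hval] at hmain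
  exact hmain
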